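/- The SE(2) exponential given by exp(c¹,c²,c³) = (sinc(c³/2)(c¹ cos(c³/2) - c² sin(c³/2)), sinc(c³/2)(c¹ sin(c³/2) + c² cos(c³/2)), c³ mod 2π) is surjective onto SE(2) ≅ ℝ² × (ℝ/2πℤ). -/

import Mathlib

open Real

/-- `sinc x = sin x / x`, with `sinc 0 = 1`. -/
noncomputable def sinc (x : ℝ) : ℝ := if x = 0 then 1 else Real.sin x / x

/-- The SE(2) exponential `𝔰𝔢(2) ≅ ℝ³ → SE(2) ≅ ℝ² × (ℝ/2πℤ)`, with the angular
component `c³` taken mod `2π`. -/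
noncomputable def se2ExpAngle (c : ℝ × ℝ × ℝ) : (ℝ × ℝ) × Real.Angle :=
  ((_root_.sinc (c.2.2 / 2) * (c.1 * Real.cos (c.2.2 / 2) - c.2.1 * Real.sin (c.2.2 / 2)),
    _root_.sinc (c.2.2 / 2) * (c.1 * Real.sin (c.2.2 / 2) + c.2.1 * Real.cos (c.2.2 / 2))),
   (c.2.2 : Real.Angle))

lemma sinc_ne_zero_of_mem {x : ℝ} (h1 : -π < x) (h2 : x < π) : _root_.sinc x ≠ 0 := by
  unfold _root_.sinc
  rcases eq_or_ne x 0 with h | h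
  · simp [h]
  · simp only [if_neg h]
    have : Real.sin x ≠ 0 := by
      exact fun hz => h ((Real.sin_eq_zero_iff_of_lt_of_lt h1 h2).mp hz)
    exact div_ne_zero this h

/-- The SE(2) exponential is surjective onto `SE(2) ≅ ℝ² × (ℝ/2πℤ)`. -/
theorem se2_exp_surjective : Function.Surjective se2ExpAngle := by
  rintro ⟨⟨a, b⟩, θ⟩
  set t := θ.toReal with ht
  set α := t / 2 with hα
  have hπ := Real.pi_pos
  have h1 : -π < α := by
    have := θ.neg_pi_lt_toReal
    rw [hα]; nlinarith
  have h2 : α < π := by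
    have := θ.toReal_le_pi
    rw [hα]; nlinarith
  have hs : _root_.sinc α ≠ 0 := sinc_ne_zero_of_mem h1 h2
  refine ⟨((a * Real.cos α + b * Real.sin α) / _root_.sinc α,
          (-a * Real.sin α + b * Real.cos α) / _root_.sinc α, t), ?_⟩
  unfold se2ExpAngle
  have hpyth := Real.sin_sq_add_cos_sq α
  refine Prod.ext (Prod.ext ?_ ?_) ?_
  · show _root_.sinc α * _ = a
    field_simp
    linear_combination a * Real.sin_sq_add_cos_sq (t/2)
  · show _root_.sinc α * _ = b
    field_simp
    linear_combination b * Real.sin_sq_add_cos_sq (t/2)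
  · show (t : Real.Angle) = θ
    rw [ht, θ.coe_toReal]
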